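/- Let C = {c_1, …, c_m} be a set of clauses over boolean variables x_1, …, x_n, where each clause is a set of literals containing no variable together with its negation. Define the semi-automaton A = ({a,b,c}, Q, δ) with Q = { q_{i,j} : 1 ≤ i ≤ m, 1 ≤ j ≤ n+1 } ∪ {q_f} and transitions: for 1 ≤ i ≤ m and 1 ≤ j ≤ n, δ(q_{i,j}, b) = q_f if ¬x_j ∈ c_i and δ(q_{i,j}, b) = q_{i,j+1} otherwise; δ(q_{i,j}, c) = q_f if x_j ∈ c_i and δ(q_{i,j}, c) = q_{i,j+1} otherwise; δ(q_{i,1}, a) = q_{i,1} and δ(q_{i,j}, a) = q_f for 2 ≤ j ≤ n+1; δ(q_{i,n+1}, b) = δ(q_{i,n+1}, c) = q_{i,n+1}; and q_f is a sink state. Then A is weakly acyclic, and A has a synchronizing word in the language a(b+c)* (a word beginning with a followed by letters from {b,c}) if and only if there is a truth assignment to x_1, …, x_n satisfying every clause of C. -/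

import Mathlib

/-- A three-letter alphabet `{a, b, c}`. -/
inductive ABC : Type
  | a | b | c
  deriving DecidableEq

instance : Fintype ABC :=
  ⟨{ABC.a, ABC.b, ABC.c}, fun x => by cases x <;> simp⟩

/-- The transition function extended to words: `δ*(q, u)`. -/
def deltaStar {Q A : Type*} (δ : Q → A → Q) (q : Q) (u : List A) : Q :=
  u.foldl δ q

/-- A complete deterministic semi-automaton is weakly acyclic if all simple
cycles are self-loops. -/
def WeaklyAcyclic {Q A : Type*} (δ : Q → A → Q) : Prop :=
  ∀ (q : Q) (u : List A), u ≠ [] → deltaStar δ q u = q → ∀ x ∈ u, δ q x = q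

/-- The SAT reduction automaton for the constraint language `a(b+c)*`.

Clauses are encoded by `C : Fin m → Fin n → Option Bool`, where
`C i j = some true` means the literal `x_{j+1}` occurs in clause `c_{i+1}`,
`C i j = some false` means `¬x_{j+1}` occurs in it, and `C i j = none` means
neither occurs (so no clause contains a variable together with its negation).

States are `Option (Fin m × Fin (n+1))`, where `some (i, j)` encodes the state
`q_{i+1, j+1}` (so the second index ranges over `1, …, n+1` as in the paper)
and `none` encodes the sink state `q_f`.

Transitions: for `1 ≤ j ≤ n`, `δ(q_{i,j}, b) = q_f` if `¬x_j ∈ c_i` and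
`q_{i,j+1}` otherwise; `δ(q_{i,j}, c) = q_f` if `x_j ∈ c_i` and `q_{i,j+1}`
otherwise; `δ(q_{i,1}, a) = q_{i,1}` and `δ(q_{i,j}, a) = q_f` for `j ≥ 2`;
`q_{i,n+1}` is fixed by `b` and `c`; `q_f` is a sink state. -/
def satDelta {m n : ℕ} (C : Fin m → Fin n → Option Bool) :
    Option (Fin m × Fin (n + 1)) → ABC → Option (Fin m × Fin (n + 1))
  | none, _ => none
  | some (i, j), ABC.a => if j.val = 0 then some (i, j) else none
  | some (i, j), ABC.b =>
      if h : j.val < n then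
        if C i ⟨j.val, h⟩ = some false then none
        else some (i, ⟨j.val + 1, by omega⟩)
      else some (i, j)
  | some (i, j), ABC.c =>
      if h : j.val < n then
        if C i ⟨j.val, h⟩ = some true then none
        else some (i, ⟨j.val + 1, by omega⟩)
      else some (i, j)

section Aux

variable {m n : ℕ}

@[simp] lemma deltaStar_nil {Q A : Type*} (δ : Q → A → Q) (q : Q) :
    deltaStar δ q [] = q := rfl

@[simp] lemma deltaStar_cons {Q A : Type*} (δ : Q → A → Q) (q : Q) (x : A) (u : List A) :
    deltaStar δ q (x :: u) = deltaStar δ (δ q x) u := rfl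

@[simp] lemma satDelta_none (C : Fin m → Fin n → Option Bool) (x : ABC) :
    satDelta C none x = none := by cases x <;> rfl

lemma satDelta_a (C : Fin m → Fin n → Option Bool) (i : Fin m) (j : Fin (n + 1)) :
    satDelta C (some (i, j)) ABC.a = if j.val = 0 then some (i, j) else none := rfl

lemma satDelta_b (C : Fin m → Fin n → Option Bool) (i : Fin m) (j : Fin (n + 1)) :
    satDelta C (some (i, j)) ABC.b =
      if h : j.val < n then
        if C i ⟨j.val, h⟩ = some false then none
        else some (i, ⟨j.val + 1, by omega⟩)
      else some (i, j) := rfl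

lemma satDelta_c (C : Fin m → Fin n → Option Bool) (i : Fin m) (j : Fin (n + 1)) :
    satDelta C (some (i, j)) ABC.c =
      if h : j.val < n then
        if C i ⟨j.val, h⟩ = some true then none
        else some (i, ⟨j.val + 1, by omega⟩)
      else some (i, j) := rfl

lemma sat_sink (C : Fin m → Fin n → Option Bool) (u : List ABC) :
    deltaStar (satDelta C) none u = none := by
  induction u with
  | nil => rfl
  | cons x u ih => simp [ih]

/-- rank function -/
def srank {m n : ℕ} : Option (Fin m × Fin (n + 1)) → ℕ
  | none => n + 1
  | some (_, j) => j.val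

@[simp] lemma srank_none : srank (none : Option (Fin m × Fin (n + 1))) = n + 1 := rfl
@[simp] lemma srank_some (i : Fin m) (j : Fin (n + 1)) :
    srank (some (i, j)) = j.val := rfl

lemma step_rank (C : Fin m → Fin n → Option Bool)
    (q : Option (Fin m × Fin (n + 1))) (x : ABC) :
    satDelta C q x = q ∨ srank q < srank (satDelta C q x) := by
  match q, x with
  | none, x => exact Or.inl (satDelta_none C x)
  | some (i, j), ABC.a =>
    rw [satDelta_a]
    by_cases h : j.val = 0
    · left; rw [if_pos h]
    · right; rw [if_neg h]; simp only [srank_some, srank_none]; omega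
  | some (i, j), ABC.b =>
    rw [satDelta_b]
    by_cases h : j.val < n
    · right
      rw [dif_pos h]
      by_cases h2 : C i ⟨j.val, h⟩ = some false
      · rw [if_pos h2]; simp only [srank_some, srank_none]; omega
      · rw [if_neg h2]; simp only [srank_some]; omega
    · left; rw [dif_neg h]
  | some (i, j), ABC.c =>
    rw [satDelta_c]
    by_cases h : j.val < n
    · right
      rw [dif_pos h]
      by_cases h2 : C i ⟨j.val, h⟩ = some true
      · rw [if_pos h2]; simp only [srank_some, srank_none]; omega
      · rw [if_neg h2]; simp only [srank_some]; omega
    · left; rw [dif_neg h]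

lemma rank_mono (C : Fin m → Fin n → Option Bool) :
    ∀ (u : List ABC) (q : Option (Fin m × Fin (n + 1))),
      srank q ≤ srank (deltaStar (satDelta C) q u)
  | [], q => le_refl _
  | x :: u, q => by
    refine le_trans ?_ (rank_mono C u (satDelta C q x))
    rcases step_rank C q x with h | h
    · rw [h]
    · exact h.le

lemma loop_fix (C : Fin m → Fin n → Option Bool) :
    ∀ (u : List ABC) (q : Option (Fin m × Fin (n + 1))),
      deltaStar (satDelta C) q u = q → ∀ x ∈ u, satDelta C q x = q
  | [], q, _, x, hx => absurd hx List.not_mem_nil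
  | y :: u, q, h, x, hx => by
    have h1 : satDelta C q y = q := by
      rcases step_rank C q y with h' | h'
      · exact h'
      · exfalso
        have h2 := rank_mono C u (satDelta C q y)
        rw [show deltaStar (satDelta C) (satDelta C q y) u = q from h] at h2
        omega
    rcases List.mem_cons.1 hx with rfl | hx'
    · exact h1
    · refine loop_fix C u q ?_ x hx'
      have heq : deltaStar (satDelta C) q (y :: u) = deltaStar (satDelta C) q u := by
        rw [deltaStar_cons, h1]
      rw [← heq]; exact h

lemma run_kills (C : Fin m → Fin n → Option Bool) (β : Fin n → Bool) :
    ∀ (l : List ABC) (k : ℕ) (hk : k + l.length = n) (i : Fin m),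
      (∀ t (ht : t < l.length),
        l.get ⟨t, ht⟩ = if β ⟨k + t, by omega⟩ then ABC.c else ABC.b) →
      (∃ j : Fin n, k ≤ j.val ∧ C i j = some (β j)) →
      deltaStar (satDelta C) (some (i, ⟨k, by omega⟩)) l = none
  | [], k, hk, i, _, ⟨j, hkj, _⟩ => by
    exfalso; have := j.isLt; simp at hk; omega
  | x :: l, k, hk, i, hget, ⟨j, hkj, hj⟩ => by
    have hk' : k + l.length + 1 = n := by simp at hk; omega
    have hkn : k < n := by omega
    have hx : x = if β ⟨k, hkn⟩ then ABC.c else ABC.b := by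
      have := hget 0 (by simp)
      simpa using this
    by_cases hC : C i ⟨k, hkn⟩ = some (β ⟨k, hkn⟩)
    · -- dies at this step
      have hstep : satDelta C (some (i, ⟨k, by omega⟩)) x = none := by
        cases hb : β ⟨k, hkn⟩
        · rw [hx, hb, if_neg (by simp), satDelta_b, dif_pos hkn,
            if_pos (show C i ⟨k, hkn⟩ = _ by rw [hb] at hC; exact hC)]
        · rw [hx, hb, if_pos rfl, satDelta_c, dif_pos hkn,
            if_pos (show C i ⟨k, hkn⟩ = _ by rw [hb] at hC; exact hC)]
      rw [deltaStar_cons, hstep]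
      exact sat_sink C l
    · -- moves on
      have hstep : satDelta C (some (i, ⟨k, by omega⟩)) x
          = some (i, ⟨k + 1, by omega⟩) := by
        cases hb : β ⟨k, hkn⟩
        · rw [hx, hb, if_neg (by simp), satDelta_b, dif_pos hkn,
            if_neg (show ¬ C i ⟨k, hkn⟩ = _ by rw [hb] at hC; exact hC)]
        · rw [hx, hb, if_pos rfl, satDelta_c, dif_pos hkn,
            if_neg (show ¬ C i ⟨k, hkn⟩ = _ by rw [hb] at hC; exact hC)]
      rw [deltaStar_cons, hstep]
      refine run_kills C β l (k + 1) (by simp at hk ⊢; omega) i ?_ ?_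
      · intro t ht
        have hfin : (⟨k + 1 + t, by omega⟩ : Fin n) = ⟨k + (t + 1), by omega⟩ :=
          Fin.mk_eq_mk.mpr (by omega)
        rw [hfin]
        exact hget (t + 1) (by simp only [List.length_cons]; omega)
      · refine ⟨j, ?_, hj⟩
        rcases Nat.lt_or_ge k j.val with h | h
        · omega
        · exfalso
          have hjk : j = ⟨k, hkn⟩ := Fin.ext (by simp; omega)
          exact hC (by rw [← hjk]; exact hj)

lemma run_witness (C : Fin m → Fin n → Option Bool) :
    ∀ (l : List ABC), (∀ x ∈ l, x = ABC.b ∨ x = ABC.c) →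
    ∀ (k : ℕ) (hk : k ≤ n) (i : Fin m),
      deltaStar (satDelta C) (some (i, ⟨k, by omega⟩)) l = none →
      ∃ (t : ℕ) (ht : t < l.length) (hkt : k + t < n),
        (l.get ⟨t, ht⟩ = ABC.b ∧ C i ⟨k + t, hkt⟩ = some false) ∨
        (l.get ⟨t, ht⟩ = ABC.c ∧ C i ⟨k + t, hkt⟩ = some true) := by
  intro l
  induction l with
  | nil => intro _ k hk i h; simp at h
  | cons x l ih =>
    intro hbc k hk i h
    by_cases hkn : k < n
    · rcases hbc x List.mem_cons_self with hx | hx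
      · by_cases hC : C i ⟨k, hkn⟩ = some false
        · exact ⟨0, by simp, by omega, Or.inl ⟨by simp [hx], by
            have : (⟨k + 0, by omega⟩ : Fin n) = ⟨k, hkn⟩ := Fin.mk_eq_mk.mpr (by omega)
            rw [this]; exact hC⟩⟩
        · have hstep : satDelta C (some (i, ⟨k, by omega⟩)) x
              = some (i, ⟨k + 1, by omega⟩) := by
            rw [hx, satDelta_b, dif_pos hkn, if_neg hC]
          rw [deltaStar_cons, hstep] at h
          obtain ⟨t, ht, hkt, hw⟩ := ih (fun y hy => hbc y (List.mem_cons_of_mem x hy))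
            (k + 1) (by omega) i h
          refine ⟨t + 1, by simp; omega, by omega, ?_⟩
          have hidx : (⟨k + (t + 1), by omega⟩ : Fin n) = ⟨k + 1 + t, hkt⟩ :=
            Fin.mk_eq_mk.mpr (by omega)
          rw [hidx]
          simpa using hw
      · by_cases hC : C i ⟨k, hkn⟩ = some true
        · exact ⟨0, by simp, by omega, Or.inr ⟨by simp [hx], by
            have : (⟨k + 0, by omega⟩ : Fin n) = ⟨k, hkn⟩ := Fin.mk_eq_mk.mpr (by omega)
            rw [this]; exact hC⟩⟩
        · have hstep : satDelta C (some (i, ⟨k, by omega⟩)) x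
              = some (i, ⟨k + 1, by omega⟩) := by
            rw [hx, satDelta_c, dif_pos hkn, if_neg hC]
          rw [deltaStar_cons, hstep] at h
          obtain ⟨t, ht, hkt, hw⟩ := ih (fun y hy => hbc y (List.mem_cons_of_mem x hy))
            (k + 1) (by omega) i h
          refine ⟨t + 1, by simp; omega, by omega, ?_⟩
          have hidx : (⟨k + (t + 1), by omega⟩ : Fin n) = ⟨k + 1 + t, hkt⟩ :=
            Fin.mk_eq_mk.mpr (by omega)
          rw [hidx]
          simpa using hw
    · -- k = n, state is fixed by b and c
      have hstep : satDelta C (some (i, ⟨k, by omega⟩)) x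
          = some (i, ⟨k, by omega⟩) := by
        rcases hbc x List.mem_cons_self with hx | hx
        · rw [hx, satDelta_b, dif_neg hkn]
        · rw [hx, satDelta_c, dif_neg hkn]
      rw [deltaStar_cons, hstep] at h
      obtain ⟨t, ht, hkt, _⟩ := ih (fun y hy => hbc y (List.mem_cons_of_mem x hy)) k hk i h
      omega

end Aux
/-- The SAT reduction automaton is weakly acyclic, and it has a synchronizing
word in the language `a(b+c)*` iff the clause set encoded by `C` is
satisfiable (an assignment `β` satisfies clause `c_i` iff some literal of
`c_i` is made true, i.e., `∃ j, C i j = some (β j)`). -/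
theorem sat_reduction_a_bcStar {m n : ℕ} (C : Fin m → Fin n → Option Bool) :
    WeaklyAcyclic (satDelta C) ∧
    ((∃ v : List ABC, (∀ x ∈ v, x = ABC.b ∨ x = ABC.c) ∧
        ∃ q : Option (Fin m × Fin (n + 1)),
          ∀ p : Option (Fin m × Fin (n + 1)),
            deltaStar (satDelta C) p (ABC.a :: v) = q) ↔
      ∃ β : Fin n → Bool, ∀ i : Fin m, ∃ j : Fin n, C i j = some (β j)) := by
  constructor
  · intro q u _ hu x hx
    exact loop_fix C u q hu x hx
  constructor
  · rintro ⟨v, hbc, q, hq⟩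
    have hqnone : q = none := by
      have := hq none
      rw [deltaStar_cons, satDelta_none, sat_sink] at this
      exact this.symm
    refine ⟨fun j => if h : j.val < v.length then
      (if v.get ⟨j.val, h⟩ = ABC.c then true else false) else false, fun i => ?_⟩
    have hrun : deltaStar (satDelta C) (some (i, ⟨0, by omega⟩)) v = none := by
      have h := hq (some (i, ⟨0, by omega⟩))
      rw [hqnone] at h
      rw [deltaStar_cons] at h
      have hstep : satDelta C (some (i, (⟨0, by omega⟩ : Fin (n + 1)))) ABC.a
          = some (i, ⟨0, by omega⟩) := by
        rw [satDelta_a, if_pos rfl]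
      rwa [hstep] at h
    obtain ⟨t, ht, hkt, hw⟩ := run_witness C v hbc 0 (Nat.zero_le n) i hrun
    refine ⟨⟨t, by omega⟩, ?_⟩
    have hidx : (⟨0 + t, hkt⟩ : Fin n) = ⟨t, by omega⟩ := Fin.mk_eq_mk.mpr (by omega)
    rw [hidx] at hw
    have htv : (⟨t, by omega⟩ : Fin n).val < v.length := ht
    rcases hw with ⟨hg, hc⟩ | ⟨hg, hc⟩
    · rw [hc]
      simp only [Fin.val_mk]
      rw [dif_pos ht, if_neg (fun h => by rw [hg] at h; cases h)]
    · rw [hc]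
      simp only [Fin.val_mk]
      rw [dif_pos ht, if_pos hg]
  · rintro ⟨β, hβ⟩
    refine ⟨List.ofFn (fun j : Fin n => if β j then ABC.c else ABC.b), ?_, none, ?_⟩
    · intro x hx
      rw [List.mem_ofFn] at hx
      obtain ⟨j, hj⟩ := hx
      by_cases h : β j
      · right; rw [← hj]; simp [h]
      · left; rw [← hj]; simp [h]
    · intro p
      match p with
      | none => rw [deltaStar_cons, satDelta_none, sat_sink]
      | some (i, j) =>
        rw [deltaStar_cons]
        by_cases hj : j.val = 0
        · have hstep : satDelta C (some (i, j)) ABC.a = some (i, ⟨0, by omega⟩) := by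
            rw [satDelta_a, if_pos hj]
            congr 1
            exact Prod.ext rfl (Fin.ext hj)
          rw [hstep]
          refine run_kills C β _ 0 (by simp) i ?_ ?_
          · intro t ht
            have ht' : t < n := by simpa using ht
            have h1 : (List.ofFn fun j => if β j = true then ABC.c else ABC.b).get ⟨t, ht⟩
                = if β ⟨t, ht'⟩ = true then ABC.c else ABC.b := by
              simp [List.get_ofFn]
            rw [h1]
            have h2 : (⟨0 + t, by omega⟩ : Fin n) = ⟨t, ht'⟩ := Fin.mk_eq_mk.mpr (by omega)
            rw [h2]
          · obtain ⟨j', hj'⟩ := hβ i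
            exact ⟨j', Nat.zero_le _, hj'⟩
        · have hstep : satDelta C (some (i, j)) ABC.a = none := by
            rw [satDelta_a, if_neg hj]
          rw [hstep, sat_sink]
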